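/- Let M_1, …, M_m : ℝ^n → ℝ^n be paracontractions with respect to a norm ‖·‖ on ℝ^n sharing at least one common fixed point, and let M be the stacked map M(x_1, …, x_m) = (M_1(x_1), …, M_m(x_m)). Let S(1), …, S(q) be m × m stochastic matrices such that the graph γ(S(q)S(q−1)⋯S(1)) of the product is strongly connected. Then the fixed-point set of the composed map (S(q) ⊗ I) ∘ M ∘ (S(q−1) ⊗ I) ∘ M ∘ ⋯ ∘ (S(1) ⊗ I) ∘ M equals F(M) ∩ C; that is, it consists exactly of the stacked vectors (y, y, …, y) where y is a common fixed point of M_1, …, M_m. -/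

import Mathlib

open Filter Topology Finset
open scoped ENNReal

def IsNormOn {E : Type*} [AddCommGroup E] [Module ℝ E] (N : E → ℝ) : Prop :=
  (∀ x, N x = 0 ↔ x = 0) ∧
  (∀ (c : ℝ) (x : E), N (c • x) = |c| * N x) ∧
  (∀ x y : E, N (x + y) ≤ N x + N y)

def IsParacontraction {E : Type*} [AddCommGroup E] [Module ℝ E] [TopologicalSpace E]
    (N : E → ℝ) (P : E → E) : Prop :=
  Continuous P ∧ ∀ x y : E, P x ≠ x → P y = y → N (P x - y) < N (x - y)

def QuasiNonexpansive {E : Type*} [AddCommGroup E] (N : E → ℝ) (P : E → E) : Prop :=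
  ∀ x y : E, P y = y → N (P x - y) ≤ N (x - y)

noncomputable def pnorm {n : ℕ} (p : ℝ) (x : Fin n → ℝ) : ℝ :=
  (∑ i, |x i| ^ p) ^ (1 / p)

noncomputable def pnormE {n : ℕ} (p : ℝ≥0∞) (x : Fin n → ℝ) : ℝ :=
  if p = ⊤ then ⨆ i, |x i| else (∑ i, |x i| ^ p.toReal) ^ (1 / p.toReal)

noncomputable def mixed22 {m n : ℕ} (x : Fin m → Fin n → ℝ) : ℝ :=
  pnorm 2 (fun i => pnorm 2 (x i))

noncomputable def mixedPInf {m n : ℕ} (p : ℝ) (x : Fin m → Fin n → ℝ) : ℝ :=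
  ⨆ i, pnorm p (x i)

noncomputable def mixedEInf {m n : ℕ} (p : ℝ≥0∞) (x : Fin m → Fin n → ℝ) : ℝ :=
  ⨆ i, pnormE p (x i)

def IsStochastic {m : ℕ} (S : Matrix (Fin m) (Fin m) ℝ) : Prop :=
  (∀ i j, 0 ≤ S i j) ∧ ∀ i, ∑ j, S i j = 1

def IsDoublyStochastic {m : ℕ} (S : Matrix (Fin m) (Fin m) ℝ) : Prop :=
  IsStochastic S ∧ ∀ j, ∑ i, S i j = 1

def kron {m n : ℕ} (S : Matrix (Fin m) (Fin m) ℝ) (x : Fin m → Fin n → ℝ) :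
    Fin m → Fin n → ℝ :=
  fun i => ∑ j, S i j • x j

def stackMap {m n : ℕ} (M : Fin m → (Fin n → ℝ) → (Fin n → ℝ)) :
    (Fin m → Fin n → ℝ) → (Fin m → Fin n → ℝ) :=
  fun x i => M i (x i)

def consensusSet (m n : ℕ) : Set (Fin m → Fin n → ℝ) :=
  {x | ∀ i j : Fin m, x i = x j}

def StronglyConnected {V : Type*} (G : V → V → Prop) : Prop :=
  ∀ i j : V, Relation.ReflTransGen G i j

def graphComp {V : Type*} (Gq Gp : V → V → Prop) : V → V → Prop :=
  fun i j => ∃ k, Gp i k ∧ Gq k j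

def composeChain {m : ℕ} (G : ℕ → Fin m → Fin m → Prop) (a : ℕ) :
    ℕ → (Fin m → Fin m → Prop)
  | 0 => G a
  | k + 1 => graphComp (G (a + (k + 1))) (composeChain G a k)

def mapChain {α : Type*} (F : ℕ → α → α) : ℕ → α → α
  | 0 => id
  | k + 1 => F (k + 1) ∘ mapChain F k

noncomputable def Phi {m : ℕ} (S : ℕ → Matrix (Fin m) (Fin m) ℝ) (τ t : ℕ) :
    Matrix (Fin m) (Fin m) ℝ :=
  (List.range (t - τ)).foldl (fun A k => S (τ + k + 1) * A) 1

section Aux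

variable {E : Type*} [AddCommGroup E] [Module ℝ E]

lemma IsNormOn.nonneg {N : E → ℝ} (hN : IsNormOn N) (x : E) : 0 ≤ N x := by
  have h0 : N 0 = 0 := (hN.1 0).mpr rfl
  have htri := hN.2.2 x (-x)
  have hneg : N (-x) = N x := by
    have := hN.2.1 (-1) x
    simpa using this
  rw [add_neg_cancel, h0, hneg] at htri
  linarith

lemma IsNormOn.convex_sum {N : E → ℝ} (hN : IsNormOn N) {ι : Type*} (s : Finset ι)
    (lam : ι → ℝ) (w : ι → E) (h0 : ∀ j ∈ s, 0 ≤ lam j) :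
    N (∑ j ∈ s, lam j • w j) ≤ ∑ j ∈ s, lam j * N (w j) := by
  classical
  induction s using Finset.induction_on with
  | empty => simp [(hN.1 (0:E)).mpr rfl]
  | insert a s hnotmem ih =>
    rw [Finset.sum_insert hnotmem, Finset.sum_insert hnotmem]
    refine (hN.2.2 _ _).trans ?_
    have h1 : N (lam a • w a) = lam a * N (w a) := by
      rw [hN.2.1, abs_of_nonneg (h0 a (Finset.mem_insert_self a s))]
    rw [h1]
    exact add_le_add_right (ih fun j hj => h0 j (Finset.mem_insert_of_mem hj)) _

lemma isStochastic_one {m : ℕ} : IsStochastic (1 : Matrix (Fin m) (Fin m) ℝ) := by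
  constructor
  · intro i j
    by_cases h : i = j <;> simp [Matrix.one_apply, h]
  · intro i
    simp [Matrix.one_apply]

lemma IsStochastic.mul {m : ℕ} {A B : Matrix (Fin m) (Fin m) ℝ}
    (hA : IsStochastic A) (hB : IsStochastic B) : IsStochastic (A * B) := by
  constructor
  · intro i j
    rw [Matrix.mul_apply]
    exact Finset.sum_nonneg fun k _ => mul_nonneg (hA.1 i k) (hB.1 k j)
  · intro i
    simp only [Matrix.mul_apply]
    rw [Finset.sum_comm]
    simp only [← Finset.mul_sum]
    simp [hB.2, hA.2]

lemma foldl_mul_right {α : Type*} [Monoid α] (g : ℕ → α) (l : List ℕ) (B C : α) :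
    l.foldl (fun A k => g k * A) (B * C) = l.foldl (fun A k => g k * A) B * C := by
  induction l generalizing B with
  | nil => rfl
  | cons a l ih =>
    simp only [List.foldl_cons]
    rw [← mul_assoc, ih]

lemma Phi_self {m : ℕ} (S : ℕ → Matrix (Fin m) (Fin m) ℝ) (t : ℕ) : Phi S t t = 1 := by
  simp [Phi]

lemma Phi_succ {m : ℕ} (S : ℕ → Matrix (Fin m) (Fin m) ℝ) {t q : ℕ} (h : t < q) :
    Phi S t q = Phi S (t + 1) q * S (t + 1) := by
  unfold Phi
  have h1 : q - t = (q - (t + 1)) + 1 := by omega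
  rw [h1, List.range_succ_eq_map, List.foldl_cons, List.foldl_map]
  have h2 : (fun (A : Matrix (Fin m) (Fin m) ℝ) k => S (t + Nat.succ k + 1) * A)
      = fun A k => S ((t + 1) + k + 1) * A := by
    funext A k
    rw [show t + Nat.succ k + 1 = (t + 1) + k + 1 from by omega]
  rw [h2, show S (t + 0 + 1) * 1 = (1 : Matrix (Fin m) (Fin m) ℝ) * S (t + 1) from by simp,
    foldl_mul_right]

lemma propagate_max {m : ℕ} [Nonempty (Fin m)] (Φ : Matrix (Fin m) (Fin m) ℝ)
    (hst : IsStochastic Φ)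
    (hconn : StronglyConnected fun i j : Fin m => Φ j i ≠ 0)
    (w : Fin m → ℝ) (hw : ∀ i, w i ≤ ∑ j, Φ i j * w j) (a b : Fin m) : w a = w b := by
  obtain ⟨i₀, -, hmax⟩ := Finset.exists_max_image Finset.univ w
    ⟨Classical.arbitrary _, Finset.mem_univ _⟩
  set c := w i₀ with hc
  have hub : ∀ j, w j ≤ c := fun j => hmax j (Finset.mem_univ j)
  have hstep : ∀ p, w p = c → ∀ r, Φ p r ≠ 0 → w r = c := by
    intro p hp r hpr
    have h1 : ∑ j, Φ p j * w j ≤ ∑ j, Φ p j * c :=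
      Finset.sum_le_sum fun j _ => mul_le_mul_of_nonneg_left (hub j) (hst.1 p j)
    have h2 : ∑ j, Φ p j * c = c := by rw [← Finset.sum_mul, hst.2 p, one_mul]
    have h3 : c ≤ ∑ j, Φ p j * w j := hp ▸ hw p
    have h4 : ∑ j, Φ p j * (c - w j) = 0 := by
      have h5 : ∑ j, Φ p j * (c - w j) = ∑ j, Φ p j * c - ∑ j, Φ p j * w j := by
        rw [← Finset.sum_sub_distrib]
        exact Finset.sum_congr rfl fun j _ => by ring
      rw [h5, h2]
      linarith
    have h6 := (Finset.sum_eq_zero_iff_of_nonneg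
      (fun j _ => mul_nonneg (hst.1 p j) (by linarith [hub j]))).mp h4 r (Finset.mem_univ r)
    rcases mul_eq_zero.mp h6 with h | h
    · exact absurd h hpr
    · linarith [hub r]
  have hall : ∀ p, w p = c := by
    intro p
    have hpath := hconn p i₀
    induction hpath using Relation.ReflTransGen.head_induction_on with
    | refl => rfl
    | head h' _ ih => exact hstep _ ih _ h'
  rw [hall a, hall b]

lemma comb_le {m : ℕ} (A B : Matrix (Fin m) (Fin m) ℝ) (f g : Fin m → ℝ)
    (hA : ∀ i j, 0 ≤ A i j) (hfg : ∀ j, f j ≤ ∑ k, B j k * g k) (i : Fin m) :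
    ∑ j, A i j * f j ≤ ∑ k, (A * B) i k * g k := by
  calc ∑ j, A i j * f j ≤ ∑ j, A i j * (∑ k, B j k * g k) :=
        Finset.sum_le_sum fun j _ => mul_le_mul_of_nonneg_left (hfg j) (hA i j)
    _ = ∑ k, (A * B) i k * g k := by
        simp only [Matrix.mul_apply, Finset.mul_sum, Finset.sum_mul]
        rw [Finset.sum_comm]
        refine Finset.sum_congr rfl fun j _ => Finset.sum_congr rfl fun k _ => by ring

lemma comb_smul {m n : ℕ} (A B : Matrix (Fin m) (Fin m) ℝ) (w : Fin m → Fin n → ℝ) (i : Fin m) :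
    ∑ j, A i j • (∑ k, B j k • w k) = ∑ k, (A * B) i k • w k := by
  simp only [Finset.smul_sum, Matrix.mul_apply, Finset.sum_smul, smul_smul]
  rw [Finset.sum_comm]

end Aux
theorem stmt19 {n m : ℕ} (N : (Fin n → ℝ) → ℝ) (hN : IsNormOn N)
    (M : Fin m → (Fin n → ℝ) → (Fin n → ℝ))
    (hpc : ∀ i, IsParacontraction N (M i))
    (hcommon : ∃ y : Fin n → ℝ, ∀ i, M i y = y)
    (q : ℕ) (hq : 1 ≤ q) (S : ℕ → Matrix (Fin m) (Fin m) ℝ)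
    (hS : ∀ t, 1 ≤ t → t ≤ q → IsStochastic (S t))
    (hconn : StronglyConnected (fun i j : Fin m => Phi S 0 q j i ≠ 0)) :
    {x : Fin m → Fin n → ℝ | mapChain (fun t => kron (S t) ∘ stackMap M) q x = x}
      = {x : Fin m → Fin n → ℝ | ∃ y, (∀ i, x i = y) ∧ ∀ i, M i y = y} := by
  obtain ⟨y₀, hy₀⟩ := hcommon
  ext x
  simp only [Set.mem_setOf_eq]
  constructor
  · intro hx
    rcases isEmpty_or_nonempty (Fin m) with hE | hNE
    · exact ⟨y₀, fun i => (hE.false i).elim, hy₀⟩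
    set F : ℕ → (Fin m → Fin n → ℝ) → (Fin m → Fin n → ℝ) :=
      fun t => kron (S t) ∘ stackMap M with hFdef
    set z : ℕ → Fin m → Fin n → ℝ := fun t => mapChain F t x with hzdef
    have hz0 : z 0 = x := rfl
    have hzq : z q = x := hx
    have hzs : ∀ t i, z (t + 1) i = ∑ j, S (t + 1) i j • M j (z t j) := fun t i => rfl
    set v : ℕ → Fin m → ℝ := fun t i => N (z t i - y₀) with hvdef
    have hu_le : ∀ t j, N (M j (z t j) - y₀) ≤ v t j := by
      intro t j
      by_cases h : M j (z t j) = z t j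
      · rw [show v t j = N (z t j - y₀) from rfl, h]
      · exact le_of_lt ((hpc j).2 _ y₀ h (hy₀ j))
    have hu_lt : ∀ t j, M j (z t j) ≠ z t j → N (M j (z t j) - y₀) < v t j :=
      fun t j h => (hpc j).2 _ y₀ h (hy₀ j)
    have hPst : ∀ t, t ≤ q → IsStochastic (Phi S t q) := by
      intro t ht
      obtain ⟨d, hd⟩ : ∃ d, t + d = q := ⟨q - t, by omega⟩
      clear ht
      induction d generalizing t with
      | zero => rw [show t = q from by omega, Phi_self]; exact isStochastic_one
      | succ d ih =>
        rw [Phi_succ S (show t < q from by omega)]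
        exact (ih (t + 1) (by omega)).mul (hS (t + 1) (by omega) (by omega))
    have hstep : ∀ t, t + 1 ≤ q → ∀ i,
        v (t + 1) i ≤ ∑ j, S (t + 1) i j * N (M j (z t j) - y₀) := by
      intro t ht i
      have hst := hS (t + 1) (by omega) ht
      have hdiff : z (t + 1) i - y₀ = ∑ j, S (t + 1) i j • (M j (z t j) - y₀) := by
        have h1 : ∑ j, S (t + 1) i j • (M j (z t j) - y₀)
            = (∑ j, S (t + 1) i j • M j (z t j)) - (∑ j, S (t + 1) i j) • y₀ := by
          rw [Finset.sum_smul, ← Finset.sum_sub_distrib]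
          exact Finset.sum_congr rfl fun j _ => smul_sub _ _ _
        rw [h1, hst.2 i, one_smul, hzs t i]
      show N (z (t + 1) i - y₀) ≤ _
      rw [hdiff]
      exact hN.convex_sum _ _ _ fun j _ => hst.1 i j
    have hchain : ∀ d t, t + d = q → ∀ i, v q i ≤ ∑ j, Phi S t q i j * v t j := by
      intro d
      induction d with
      | zero =>
        intro t ht i
        rw [show t = q from by omega, Phi_self]
        simp [Matrix.one_apply]
      | succ d ih =>
        intro t ht i
        have h2 : ∀ j, v (t + 1) j ≤ ∑ k, S (t + 1) j k * v t k := by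
          intro j
          refine (hstep t (by omega) j).trans ?_
          exact Finset.sum_le_sum fun k _ =>
            mul_le_mul_of_nonneg_left (hu_le t k) ((hS (t + 1) (by omega) (by omega)).1 j k)
        refine (ih (t + 1) (by omega) i).trans ?_
        rw [Phi_succ S (show t < q from by omega)]
        exact comb_le _ _ _ _ (hPst (t + 1) (by omega)).1 h2 i
    have hchainU : ∀ t, t + 1 ≤ q → ∀ i,
        v q i ≤ ∑ j, Phi S t q i j * N (M j (z t j) - y₀) := by
      intro t ht i
      refine (hchain (q - (t + 1)) (t + 1) (by omega) i).trans ?_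
      rw [Phi_succ S (show t < q from by omega)]
      exact comb_le _ _ _ _ (hPst (t + 1) ht).1 (fun j => hstep t ht j) i
    have hveq : ∀ i, v q i = v 0 i := by
      intro i
      show N (z q i - y₀) = N (z 0 i - y₀)
      rw [hzq, hz0]
    have hv0c : ∀ a b, v 0 a = v 0 b := by
      refine propagate_max (Phi S 0 q) (hPst 0 (by omega)) hconn _ ?_
      intro i
      have h := hchain q 0 (by omega) i
      rwa [hveq i] at h
    obtain ⟨i₀⟩ := id hNE
    set c := v 0 i₀ with hcdef
    have hvc : ∀ j, v 0 j = c := fun j => hv0c j i₀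
    have hvle : ∀ t, t ≤ q → ∀ j, v t j ≤ c := by
      intro t
      induction t with
      | zero => exact fun _ j => (hvc j).le
      | succ t ih =>
        intro ht j
        refine (hstep t ht j).trans ?_
        have hst := hS (t + 1) (by omega) ht
        calc ∑ k, S (t + 1) j k * N (M k (z t k) - y₀)
            ≤ ∑ k, S (t + 1) j k * c := Finset.sum_le_sum fun k _ =>
              mul_le_mul_of_nonneg_left ((hu_le t k).trans (ih (by omega) k)) (hst.1 j k)
          _ = c := by rw [← Finset.sum_mul, hst.2 j, one_mul]
    have hMfix : ∀ t, t + 1 ≤ q → ∀ j, (∃ i, Phi S t q i j ≠ 0) → M j (z t j) = z t j := by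
      intro t ht j hj
      by_contra hne
      obtain ⟨i, hij⟩ := hj
      have hlt : N (M j (z t j) - y₀) < c := lt_of_lt_of_le (hu_lt t j hne) (hvle t (by omega) j)
      have hle : ∀ k, N (M k (z t k) - y₀) ≤ c := fun k =>
        (hu_le t k).trans (hvle t (by omega) k)
      have h1 : c ≤ ∑ k, Phi S t q i k * N (M k (z t k) - y₀) := by
        have h := hchainU t ht i
        rwa [hveq i, hvc i] at h
      have h2 : ∑ k, Phi S t q i k * N (M k (z t k) - y₀) < ∑ k, Phi S t q i k * c := by
        refine Finset.sum_lt_sum (fun k _ =>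
          mul_le_mul_of_nonneg_left (hle k) ((hPst t (by omega)).1 i k)) ⟨j, Finset.mem_univ j, ?_⟩
        exact mul_lt_mul_of_pos_left hlt
          (lt_of_le_of_ne ((hPst t (by omega)).1 i j) (Ne.symm hij))
      have h3 : ∑ k, Phi S t q i k * c = c := by
        rw [← Finset.sum_mul, (hPst t (by omega)).2 i, one_mul]
      linarith
    have hcol : ∀ j, ∃ i, Phi S 0 q i j ≠ 0 := by
      intro j
      have hb : ∃ b, Phi S 0 q j b ≠ 0 := by
        by_contra h
        push_neg at h
        have hrow : ∑ b, Phi S 0 q j b = 1 := (hPst 0 (by omega)).2 j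
        rw [Finset.sum_eq_zero fun b _ => h b] at hrow
        exact one_ne_zero hrow.symm
      obtain ⟨b, hb⟩ := hb
      rcases (hconn j b).cases_head with heq | ⟨k, hk, -⟩
      · subst heq; exact ⟨j, hb⟩
      · exact ⟨k, hk⟩
    have hlin : ∀ d t, t + d = q → ∀ i, z q i = ∑ j, Phi S t q i j • z t j := by
      intro d
      induction d with
      | zero =>
        intro t ht i
        rw [show t = q from by omega, Phi_self]
        simp [Matrix.one_apply]
      | succ d ih =>
        intro t ht i
        rw [ih (t + 1) (by omega) i]
        calc ∑ j, Phi S (t + 1) q i j • z (t + 1) j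
            = ∑ j, Phi S (t + 1) q i j • ∑ k, S (t + 1) j k • M k (z t k) :=
              Finset.sum_congr rfl fun j _ => by rw [hzs t j]
          _ = ∑ k, (Phi S (t + 1) q * S (t + 1)) i k • M k (z t k) := comb_smul _ _ _ i
          _ = ∑ k, Phi S t q i k • M k (z t k) := by
              rw [← Phi_succ S (show t < q from by omega)]
          _ = ∑ k, Phi S t q i k • z t k := by
              refine Finset.sum_congr rfl fun k _ => ?_
              by_cases h : Phi S t q i k = 0
              · rw [h, zero_smul, zero_smul]
              · rw [hMfix t (by omega) k ⟨i, h⟩]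
    have hx0 : ∀ i, x i = ∑ j, Phi S 0 q i j • x j := by
      intro i
      have h := hlin q 0 (by omega) i
      rwa [hzq, hz0] at h
    have hcons : ∀ a b, x a = x b := by
      intro a b
      funext co
      refine propagate_max (Phi S 0 q) (hPst 0 (by omega)) hconn (fun j => x j co) ?_ a b
      intro i
      refine le_of_eq ?_
      show x i co = ∑ j, Phi S 0 q i j * x j co
      have h := congrFun (hx0 i) co
      rw [h]
      simp [Finset.sum_apply]
    refine ⟨x i₀, fun i => hcons i i₀, fun i => ?_⟩
    have hfix := hMfix 0 (by omega) i (hcol i)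
    rw [hz0] at hfix
    rw [← hcons i i₀]
    exact hfix
  · rintro ⟨y, hxy, hMy⟩
    have key : ∀ t, t ≤ q → mapChain (fun t => kron (S t) ∘ stackMap M) t x = x := by
      intro t
      induction t with
      | zero => intro _; rfl
      | succ t ih =>
        intro ht
        have hst := hS (t + 1) (by omega) ht
        have hx' : stackMap M x = x := by
          funext i
          show M i (x i) = x i
          rw [hxy i]
          exact hMy i
        show (kron (S (t + 1)) ∘ stackMap M) (mapChain (fun t => kron (S t) ∘ stackMap M) t x) = x
        rw [ih (by omega)]
        simp only [Function.comp_apply, hx']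
        funext i
        show ∑ j, S (t + 1) i j • x j = x i
        calc ∑ j, S (t + 1) i j • x j = ∑ j, S (t + 1) i j • y :=
              Finset.sum_congr rfl fun j _ => by rw [hxy j]
          _ = (∑ j, S (t + 1) i j) • y := (Finset.sum_smul).symm
          _ = y := by rw [hst.2 i, one_smul]
          _ = x i := (hxy i).symm
    exact key q le_rfl
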